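/- Let h : ℝ^d → ℝ have ℓ-Lipschitz gradient, and let τ > 0. Then for all x ∈ ℝ^d, ‖∇h_τ(x) − ∇h(x)‖² ≤ (τ²/4) ℓ² (d+3)³, where h_τ(x) = E_ν[h(x + τν)] is the Gaussian smoothed function. -/

import Mathlib

open MeasureTheory ProbabilityTheory

/-- The standard Gaussian measure `N(0, I_d)` on `ℝ^d`. -/
noncomputable def stdGaussian (d : ℕ) : Measure (EuclideanSpace ℝ (Fin d)) :=
  (Measure.pi fun _ : Fin d => gaussianReal 0 1).map
    (EuclideanSpace.equiv (Fin d) ℝ).symm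

open Real Filter Set

lemma integral_Ioi_mul_exp : ∫ x in Ioi (0:ℝ), x * rexp (-x ^ 2 / 2) = 1 := by
  have hderiv : ∀ x ∈ Ici (0:ℝ), HasDerivAt (fun t : ℝ => -rexp (-t ^ 2 / 2))
      (x * rexp (-x ^ 2 / 2)) x := by
    intro x _
    have h1 : HasDerivAt (fun t : ℝ => -t ^ 2 / 2) (-x) x := by
      have := ((hasDerivAt_pow 2 x).neg).div_const 2
      simpa using this.congr_deriv (by ring)
    have := (h1.exp).neg
    exact this.congr_deriv (by ring)
  have f'int : IntegrableOn (fun x : ℝ => x * rexp (-x ^ 2 / 2)) (Ioi 0) := by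
    have := (integrable_mul_exp_neg_mul_sq (b := (1:ℝ)/2) (by norm_num)).integrableOn
      (s := Ioi (0:ℝ))
    refine this.congr_fun (fun x _ => by ring_nf) measurableSet_Ioi
  have htend : Tendsto (fun t : ℝ => -rexp (-t ^ 2 / 2)) atTop (nhds 0) := by
    rw [← neg_zero]
    refine (Real.tendsto_exp_atBot.comp ?_).neg
    have : Tendsto (fun t : ℝ => t ^ 2 / 2) atTop atTop :=
      (tendsto_pow_atTop (by norm_num)).atTop_div_const (by norm_num)
    simpa [neg_div] using this
  have := integral_Ioi_of_hasDerivAt_of_tendsto' hderiv f'int htend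
  simpa using this

lemma gauss_pdf_eq (x : ℝ) : gaussianPDFReal 0 1 x = (√(2 * π))⁻¹ * rexp (-x ^ 2 / 2) := by
  simp [gaussianPDFReal]

lemma integrable_withDensity_gauss {g : ℝ → ℝ} (hg : Measurable g)
    (hint : Integrable (fun x => g x * rexp (-x ^ 2 / 2))) :
    Integrable g (gaussianReal 0 1) := by
  rw [gaussianReal_of_var_ne_zero 0 one_ne_zero,
    integrable_withDensity_iff (measurable_gaussianPDF 0 1)
      (Filter.Eventually.of_forall fun x => ENNReal.ofReal_lt_top)]
  have : (fun x => g x * (gaussianPDF 0 1 x).toReal)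
      = fun x => (√(2 * π))⁻¹ * (g x * rexp (-x ^ 2 / 2)) := by
    ext x
    rw [gaussianPDF, ENNReal.toReal_ofReal (gaussianPDFReal_nonneg 0 1 x), gauss_pdf_eq]
    ring
  rw [this]
  exact hint.const_mul _

lemma integrable_abs_gauss : Integrable (fun t => |t|) (gaussianReal 0 1) := by
  refine integrable_withDensity_gauss measurable_abs ?_
  have := (integrable_mul_exp_neg_mul_sq (b := (1:ℝ)/2) (by norm_num)).abs
  refine this.congr (Filter.Eventually.of_forall fun x => ?_)
  show |x * rexp (-(1/2) * x ^ 2)| = |x| * rexp (-x ^ 2 / 2)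
  rw [abs_mul, abs_of_nonneg (Real.exp_nonneg _)]
  ring_nf

lemma integrable_sq_gauss : Integrable (fun t => t ^ 2) (gaussianReal 0 1) := by
  refine integrable_withDensity_gauss (by fun_prop) ?_
  have := integrable_rpow_mul_exp_neg_mul_sq (b := (1:ℝ)/2) (by norm_num) (s := ((2:ℕ):ℝ)) (by norm_num)
  refine this.congr (Filter.Eventually.of_forall fun x => ?_)
  show x ^ ((2:ℕ):ℝ) * rexp (-(1/2) * x ^ 2) = x ^ 2 * rexp (-x ^ 2 / 2)
  rw [Real.rpow_natCast]
  ring_nf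

lemma integral_withDensity_gauss (g : ℝ → ℝ) :
    ∫ t, g t ∂(gaussianReal 0 1) = (√(2 * π))⁻¹ * ∫ x, g x * rexp (-x ^ 2 / 2) := by
  rw [gaussianReal_of_var_ne_zero 0 one_ne_zero]
  have h1 : (gaussianPDF 0 1) = fun x => ((gaussianPDFReal 0 1 x).toNNReal : ENNReal) := by
    ext x; rw [gaussianPDF, ENNReal.ofReal]
  rw [h1, integral_withDensity_eq_integral_smul
    ((measurable_gaussianPDFReal 0 1).real_toNNReal) g]
  rw [← integral_const_mul]
  congr 1
  ext x
  rw [NNReal.smul_def, Real.coe_toNNReal _ (gaussianPDFReal_nonneg 0 1 x), smul_eq_mul,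
    gauss_pdf_eq]
  ring

lemma integral_Ioi_mul_exp' : ∫ x in Ioi (0:ℝ), x * rexp (-x ^ 2 / 2) = 1 := integral_Ioi_mul_exp

lemma integral_abs_gauss_le : ∫ t, |t| ∂(gaussianReal 0 1) ≤ 1 := by
  rw [integral_withDensity_gauss]
  have h2 : ∫ x : ℝ, |x| * rexp (-x ^ 2 / 2) = 2 := by
    have := integral_comp_abs (f := fun x => x * rexp (-x ^ 2 / 2))
    rw [show (fun x : ℝ => |x| * rexp (-x ^ 2 / 2)) = fun x : ℝ => |x| * rexp (-|x| ^ 2 / 2) by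
      ext x; rw [sq_abs]] at *
    rw [this, integral_Ioi_mul_exp']; norm_num
  rw [h2]
  rw [inv_mul_le_iff₀ (by positivity), mul_one]
  nlinarith [Real.sq_sqrt (by positivity : (0:ℝ) ≤ 2*π), Real.sqrt_nonneg (2*π),
    Real.pi_gt_three]

noncomputable def eqE (d : ℕ) : (Fin d → ℝ) ≃ᵐ EuclideanSpace ℝ (Fin d) :=
  (EuclideanSpace.equiv (Fin d) ℝ).symm.toHomeomorph.toMeasurableEquiv

lemma stdGaussian_eq (d : ℕ) :
    stdGaussian d = (Measure.pi fun _ : Fin d => gaussianReal 0 1).map (eqE d) := rfl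

instance stdGaussian_prob (d : ℕ) : IsProbabilityMeasure (stdGaussian d) := by
  rw [stdGaussian_eq]
  exact Measure.isProbabilityMeasure_map (eqE d).measurable.aemeasurable

lemma map_eval_pi {d : ℕ} (i : Fin d) :
    (Measure.pi fun _ : Fin d => gaussianReal 0 1).map (fun x => x i) = gaussianReal 0 1 := by
  ext s hs
  rw [Measure.map_apply (measurable_pi_apply i) hs, Set.eval_preimage, Measure.pi_pi]
  rw [Finset.prod_eq_single i (fun j _ hj => by simp [Function.update_of_ne hj])
    (by simp), Function.update_self]

lemma integrable_eval_pi {d : ℕ} {i : Fin d} {g : ℝ → ℝ}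
    (hg : Integrable g (gaussianReal 0 1)) :
    Integrable (fun x : Fin d → ℝ => g (x i)) (Measure.pi fun _ : Fin d => gaussianReal 0 1) := by
  have hg' := hg
  rw [← map_eval_pi (d := d) i] at hg'
  exact (integrable_map_measure hg'.aestronglyMeasurable
    (measurable_pi_apply i).aemeasurable).mp hg'

lemma integral_eval_pi {d : ℕ} {i : Fin d} {g : ℝ → ℝ} (hg : AEStronglyMeasurable g (gaussianReal 0 1)) :
    ∫ x, g (x i) ∂(Measure.pi fun _ : Fin d => gaussianReal 0 1) = ∫ t, g t ∂(gaussianReal 0 1) := by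
  have hg' := hg
  rw [← map_eval_pi (d := d) i] at hg'
  conv_rhs => rw [← map_eval_pi (d := d) i]
  rw [integral_map (measurable_pi_apply i).aemeasurable hg']

lemma norm_le_sum_abs {d : ℕ} (ν : EuclideanSpace ℝ (Fin d)) : ‖ν‖ ≤ ∑ i, |ν i| := by
  rw [EuclideanSpace.norm_eq]
  have h1 : ∑ i, ‖ν i‖ ^ 2 ≤ (∑ i, |ν i|) ^ 2 := by
    simp only [Real.norm_eq_abs]
    exact Finset.sum_sq_le_sq_sum_of_nonneg (fun i _ => abs_nonneg _)
  calc √(∑ i, ‖ν i‖ ^ 2) ≤ √((∑ i, |ν i|) ^ 2) := Real.sqrt_le_sqrt h1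
  _ = ∑ i, |ν i| := Real.sqrt_sq (Finset.sum_nonneg fun i _ => abs_nonneg _)

lemma norm_sq_eq_sum {d : ℕ} (ν : EuclideanSpace ℝ (Fin d)) : ‖ν‖ ^ 2 = ∑ i, (ν i) ^ 2 := by
  rw [EuclideanSpace.norm_eq, Real.sq_sqrt (Finset.sum_nonneg fun i _ => sq_nonneg _)]
  simp [Real.norm_eq_abs, sq_abs]

lemma integrable_norm_stdGaussian (d : ℕ) :
    Integrable (fun ν => ‖ν‖) (stdGaussian d) := by
  rw [stdGaussian_eq, integrable_map_equiv (eqE d)]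
  refine Integrable.mono' (g := fun x : Fin d → ℝ => ∑ i, |x i|)
    (integrable_finset_sum _ (fun i _ => integrable_eval_pi integrable_abs_gauss))
    ((((EuclideanSpace.equiv (Fin d) ℝ).symm.continuous).norm).aestronglyMeasurable) ?_
  filter_upwards with x
  rw [Function.comp_apply, norm_norm]
  exact norm_le_sum_abs _

lemma integrable_norm_sq_stdGaussian (d : ℕ) :
    Integrable (fun ν => ‖ν‖ ^ 2) (stdGaussian d) := by
  rw [stdGaussian_eq, integrable_map_equiv (eqE d)]
  have : ((fun ν : EuclideanSpace ℝ (Fin d) => ‖ν‖ ^ 2) ∘ (eqE d))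
      = fun x : Fin d → ℝ => ∑ i, (x i) ^ 2 := by
    ext x
    rw [Function.comp_apply, norm_sq_eq_sum]
    rfl
  rw [this]
  exact integrable_finset_sum _ (fun i _ => integrable_eval_pi integrable_sq_gauss)

lemma integral_norm_stdGaussian_le (d : ℕ) (II : Integrable (fun t => |t|) (gaussianReal 0 1))
    (hI : ∫ t, |t| ∂(gaussianReal 0 1) ≤ 1) :
    ∫ ν, ‖ν‖ ∂(stdGaussian d) ≤ d := by
  rw [stdGaussian_eq, MeasureTheory.integral_map_equiv]
  have step1 : ∫ x, ‖eqE d x‖ ∂(Measure.pi fun _ : Fin d => gaussianReal 0 1)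
      ≤ ∫ x, ∑ i, |x i| ∂(Measure.pi fun _ : Fin d => gaussianReal 0 1) := by
    refine integral_mono ?_ (integrable_finset_sum _
      (fun i _ => integrable_eval_pi II)) (fun x => norm_le_sum_abs _)
    have := (integrable_norm_stdGaussian d)
    rwa [stdGaussian_eq, integrable_map_equiv (eqE d)] at this
  refine step1.trans ?_
  rw [integral_finset_sum _ (fun i _ => integrable_eval_pi II)]
  calc (∑ _i : Fin d, ∫ x, |x _i| ∂(Measure.pi fun _ : Fin d => gaussianReal 0 1))
      = ∑ _i : Fin d, ∫ t, |t| ∂(gaussianReal 0 1) := by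
        refine Finset.sum_congr rfl (fun i _ => ?_)
        exact integral_eval_pi II.aestronglyMeasurable
  _ ≤ ∑ _i : Fin d, 1 := Finset.sum_le_sum (fun i _ => hI)
  _ = d := by simp

lemma fderiv_lip {d : ℕ} {h : EuclideanSpace ℝ (Fin d) → ℝ} {ℓ : ℝ}
    (hlip : ∀ x x', ‖gradient h x - gradient h x'‖ ≤ ℓ * ‖x - x'‖) :
    ∀ a b, ‖fderiv ℝ h a - fderiv ℝ h b‖ ≤ ℓ * ‖a - b‖ := by
  intro a b
  have e1 : fderiv ℝ h a - fderiv ℝ h b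
      = (InnerProductSpace.toDual ℝ (EuclideanSpace ℝ (Fin d))) (gradient h a - gradient h b) := by
    rw [map_sub, gradient, gradient, LinearIsometryEquiv.apply_symm_apply,
      LinearIsometryEquiv.apply_symm_apply]
  rw [e1, LinearIsometryEquiv.norm_map]
  exact hlip a b


set_option maxHeartbeats 2000000

/-- If `h : ℝ^d → ℝ` has `ℓ`-Lipschitz gradient and `τ > 0`, then for all `x`,
`‖∇h_τ(x) − ∇h(x)‖² ≤ (τ²/4) ℓ² (d+3)³`, where `h_τ(x) = E_ν[h(x + τν)]`. -/
theorem zo_vrgda_stmt5 (d : ℕ) (h : EuclideanSpace ℝ (Fin d) → ℝ) (ℓ τ : ℝ) (hτ : 0 < τ)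
    (hdiff : Differentiable ℝ h)
    (hlip : ∀ x x', ‖gradient h x - gradient h x'‖ ≤ ℓ * ‖x - x'‖) :
    ∀ x, ‖gradient (fun z => ∫ ν, h (z + τ • ν) ∂(stdGaussian d)) x - gradient h x‖ ^ 2 ≤
      τ ^ 2 / 4 * ℓ ^ 2 * ((d : ℝ) + 3) ^ 3 := by
  intro x
  rcases Nat.eq_zero_or_pos d with hd | hd
  · subst hd
    have h0 : ∀ y : EuclideanSpace ℝ (Fin 0), ‖y‖ = 0 := fun y => by
      rw [EuclideanSpace.norm_eq]; simp
    rw [h0]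
    norm_num
    positivity
  have hℓ : 0 ≤ ℓ := by
    set v : EuclideanSpace ℝ (Fin d) := EuclideanSpace.single ⟨0, hd⟩ 1
    have hv : ‖v - 0‖ = 1 := by
      rw [sub_zero]; simp [v, EuclideanSpace.norm_single]
    have := (norm_nonneg (gradient h v - gradient h 0)).trans (hlip v 0)
    rwa [hv, mul_one] at this
  have hfd := fderiv_lip hlip
  set μ := stdGaussian d with hμ
  haveI : IsProbabilityMeasure μ := stdGaussian_prob d
  -- measurability / integrability helpers
  have hcont : ∀ z : EuclideanSpace ℝ (Fin d), Continuous fun ν : EuclideanSpace ℝ (Fin d) =>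
      h (z + τ • ν) :=
    fun z => hdiff.continuous.comp (continuous_const.add (continuous_const_smul τ))
  have hnormint : Integrable (fun ν : EuclideanSpace ℝ (Fin d) => ‖ν‖) μ :=
    integrable_norm_stdGaussian d
  have hnormsqint : Integrable (fun ν : EuclideanSpace ℝ (Fin d) => ‖ν‖ ^ 2) μ :=
    integrable_norm_sq_stdGaussian d
  have hfdcont : Continuous fun y : EuclideanSpace ℝ (Fin d) => fderiv ℝ h y := by
    refine LipschitzWith.continuous (K := ℓ.toNNReal) ?_
    refine LipschitzWith.of_dist_le_mul fun a b => ?_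
    rw [dist_eq_norm, dist_eq_norm, Real.coe_toNNReal _ hℓ]
    exact hfd a b
  have hF'cont : Continuous fun ν : EuclideanSpace ℝ (Fin d) => fderiv ℝ h (x + τ • ν) :=
    hfdcont.comp (continuous_const.add (continuous_const_smul τ))
  -- pointwise bounds
  have hnorm_smul : ∀ ν : EuclideanSpace ℝ (Fin d), ‖τ • ν‖ = τ * ‖ν‖ := fun ν => by
    rw [norm_smul, Real.norm_eq_abs, abs_of_pos hτ]
  have hb1 : ∀ (z ν : EuclideanSpace ℝ (Fin d)),
      ‖fderiv ℝ h (z + τ • ν)‖ ≤ ‖fderiv ℝ h x‖ + ℓ * ‖z - x‖ + ℓ * (τ * ‖ν‖) := by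
    intro z ν
    have h1 : ‖fderiv ℝ h (z + τ • ν)‖ - ‖fderiv ℝ h x‖ ≤ ℓ * ‖z + τ • ν - x‖ :=
      (norm_sub_norm_le _ _).trans (hfd _ _)
    have h2 : ‖z + τ • ν - x‖ ≤ ‖z - x‖ + τ * ‖ν‖ := by
      calc ‖z + τ • ν - x‖ = ‖(z - x) + τ • ν‖ := by rw [add_sub_right_comm]
      _ ≤ ‖z - x‖ + ‖τ • ν‖ := norm_add_le _ _
      _ = ‖z - x‖ + τ * ‖ν‖ := by rw [hnorm_smul]
    nlinarith [mul_le_mul_of_nonneg_left h2 hℓ]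
  -- the main derivative computation
  have hasF : HasFDerivAt (fun z => ∫ ν, h (z + τ • ν) ∂μ)
      (∫ ν, fderiv ℝ h (x + τ • ν) ∂μ) x := by
    refine hasFDerivAt_integral_of_dominated_of_fderiv_le (F' := fun z ν => fderiv ℝ h (z + τ • ν))
      (bound := fun ν => ‖fderiv ℝ h x‖ + ℓ + ℓ * τ * ‖ν‖) (s := Metric.ball x 1) (Metric.ball_mem_nhds x one_pos)
      (Filter.Eventually.of_forall fun z => (hcont z).aestronglyMeasurable) ?_
      (hF'cont.aestronglyMeasurable) ?_ ?_ ?_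
    · -- Integrable (fun ν => h (x + τ • ν)) μ
      refine Integrable.mono'
        (g := fun ν => |h x| + (‖fderiv ℝ h x‖ * τ) * ‖ν‖ + (ℓ * τ ^ 2) * ‖ν‖ ^ 2)
        (((integrable_const _).add (hnormint.const_mul _)).add (hnormsqint.const_mul _))
        (hcont x).aestronglyMeasurable ?_
      filter_upwards with ν
      have hmem : x + τ • ν ∈ Metric.closedBall x (τ * ‖ν‖) := by
        rw [Metric.mem_closedBall, dist_eq_norm, add_sub_cancel_left, hnorm_smul]
      have hxmem : x ∈ Metric.closedBall x (τ * ‖ν‖) :=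
        Metric.mem_closedBall_self (by positivity)
      have hmvt : ‖h (x + τ • ν) - h x‖ ≤ (‖fderiv ℝ h x‖ + ℓ * (τ * ‖ν‖)) * ‖x + τ • ν - x‖ := by
        refine (convex_closedBall x (τ * ‖ν‖)).norm_image_sub_le_of_norm_fderiv_le
          (fun y _ => hdiff y) (fun y hy => ?_) hxmem hmem
        have := hb1 y ((0 : EuclideanSpace ℝ (Fin d)))
        have h3 : ‖fderiv ℝ h y‖ ≤ ‖fderiv ℝ h x‖ + ℓ * ‖y - x‖ := by
          have h1 : ‖fderiv ℝ h y‖ - ‖fderiv ℝ h x‖ ≤ ℓ * ‖y - x‖ :=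
            (norm_sub_norm_le _ _).trans (hfd _ _)
          linarith
        refine h3.trans ?_
        have : ‖y - x‖ ≤ τ * ‖ν‖ := by
          rw [← dist_eq_norm]; exact Metric.mem_closedBall.mp hy
        nlinarith [mul_le_mul_of_nonneg_left this hℓ]
      rw [add_sub_cancel_left, hnorm_smul] at hmvt
      have : ‖h (x + τ • ν)‖ ≤ ‖h x‖ + ‖h (x + τ • ν) - h x‖ := by
        calc ‖h (x + τ • ν)‖ = ‖h x + (h (x + τ • ν) - h x)‖ := by ring_nf
        _ ≤ ‖h x‖ + ‖h (x + τ • ν) - h x‖ := norm_add_le _ _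
      refine this.trans ?_
      rw [Real.norm_eq_abs (h x)]
      nlinarith [norm_nonneg ν, norm_nonneg (fderiv ℝ h x), abs_nonneg (h x)]
    · -- h_bound
      filter_upwards with ν z hz
      have hz1 : ‖z - x‖ ≤ 1 := by
        rw [← dist_eq_norm]; exact (Metric.mem_ball.mp hz).le
      refine (hb1 z ν).trans ?_
      nlinarith [mul_le_mul_of_nonneg_left hz1 hℓ, norm_nonneg ν]
    · -- bound integrable
      exact (integrable_const _).add ((hnormint.const_mul _))
    · -- h_diff
      filter_upwards with ν z _
      have := ((hdiff (z + τ • ν)).hasFDerivAt).comp z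
        ((hasFDerivAt_id z).add_const (τ • ν))
      rw [ContinuousLinearMap.comp_id] at this
      exact this
  -- integrability of the derivative integrand
  have hintF' : Integrable (fun ν => fderiv ℝ h (x + τ • ν)) μ := by
    refine Integrable.mono' (g := fun ν => ‖fderiv ℝ h x‖ + (ℓ * τ) * ‖ν‖)
      ((integrable_const _).add (hnormint.const_mul _)) hF'cont.aestronglyMeasurable ?_
    filter_upwards with ν
    have := hb1 x ν
    simp only [sub_self, norm_zero, mul_zero, add_zero] at this
    linarith [this]
  -- identify the gradient difference
  have hfderiv_eq : fderiv ℝ (fun z => ∫ ν, h (z + τ • ν) ∂μ) x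
      = ∫ ν, fderiv ℝ h (x + τ • ν) ∂μ := hasF.fderiv
  have hkey : ‖gradient (fun z => ∫ ν, h (z + τ • ν) ∂μ) x - gradient h x‖
      = ‖(∫ ν, fderiv ℝ h (x + τ • ν) ∂μ) - fderiv ℝ h x‖ := by
    rw [gradient, gradient, ← map_sub, LinearIsometryEquiv.norm_map, hfderiv_eq]
  rw [hkey]
  -- bound the norm
  have hconst : (∫ _ν, fderiv ℝ h x ∂μ) = fderiv ℝ h x := by
    rw [integral_const, probReal_univ, one_smul]
  have hnb : ‖(∫ ν, fderiv ℝ h (x + τ • ν) ∂μ) - fderiv ℝ h x‖ ≤ ℓ * τ * d := by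
    rw [← hconst, ← integral_sub hintF' (integrable_const _)]
    refine (norm_integral_le_integral_norm _).trans ?_
    have step : ∫ ν, ‖fderiv ℝ h (x + τ • ν) - fderiv ℝ h x‖ ∂μ
        ≤ ∫ ν, (ℓ * τ) * ‖ν‖ ∂μ := by
      refine integral_mono ((hintF'.sub (integrable_const _)).norm)
        (hnormint.const_mul _) fun ν => ?_
      have := hfd (x + τ • ν) x
      rw [add_sub_cancel_left, hnorm_smul] at this
      calc ‖fderiv ℝ h (x + τ • ν) - fderiv ℝ h x‖ ≤ ℓ * (τ * ‖ν‖) := this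
      _ = (ℓ * τ) * ‖ν‖ := by ring
    refine step.trans ?_
    rw [integral_const_mul]
    have : ∫ ν, ‖ν‖ ∂μ ≤ d := integral_norm_stdGaussian_le d integrable_abs_gauss
      integral_abs_gauss_le
    calc ℓ * τ * ∫ ν, ‖ν‖ ∂μ ≤ ℓ * τ * d :=
      mul_le_mul_of_nonneg_left this (by positivity)
    _ = ℓ * τ * d := rfl
  have hnn : (0:ℝ) ≤ ‖(∫ ν, fderiv ℝ h (x + τ • ν) ∂μ) - fderiv ℝ h x‖ := norm_nonneg _
  have hsq : ‖(∫ ν, fderiv ℝ h (x + τ • ν) ∂μ) - fderiv ℝ h x‖ ^ 2 ≤ (ℓ * τ * d) ^ 2 := by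
    have := mul_self_le_mul_self hnn hnb
    nlinarith
  refine hsq.trans ?_
  have hd' : (1:ℝ) ≤ (d:ℝ) := by exact_mod_cast hd
  nlinarith [sq_nonneg (ℓ * τ), sq_nonneg ℓ, sq_nonneg τ, mul_pos hτ hτ,
    sq_nonneg ((d:ℝ) - 3), sq_nonneg ((d:ℝ) + 3), hd']
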